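/- arXiv:1308.3280 — 5 statements merged into one kernel-verified Lean document; each statement's English description precedes it below -/
import Mathlib

section
/- Let A ∈ R^{n×m} and A' ∈ R^{(n+1)×m} with n + 1 ≤ m, and suppose the first n rows of A' coincide with the rows of A. Let σ₁ ≤ σ₂ ≤ … ≤ σ_n be the singular values of A and β₁ ≤ β₂ ≤ … ≤ β_{n+1} be the singular values of A'. Then the singular values interlace: β₁ ≤ σ₁ ≤ β₂ ≤ σ₂ ≤ … ≤ β_n ≤ σ_n ≤ β_{n+1}. -/
open Matrix Finset Submodule Module

namespace SVDInterlace

/-- Dot product of two linear combinations of a dot-orthonormal family. -/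
lemma dot_sum_sum {k N : ℕ} {v : Fin k → Fin N → ℝ}
    (hv : ∀ i j, v i ⬝ᵥ v j = if i = j then (1:ℝ) else 0) (c d : Fin k → ℝ) :
    (∑ i, c i • v i) ⬝ᵥ (∑ j, d j • v j) = ∑ i, c i * d i := by
  have expand : ∀ (y : Fin N → ℝ), (∑ i, c i • v i) ⬝ᵥ y = ∑ i, c i * (v i ⬝ᵥ y) := by
    intro y
    simp only [dotProduct, Finset.sum_apply, Pi.smul_apply, smul_eq_mul,
      Finset.sum_mul, Finset.mul_sum]
    rw [Finset.sum_comm]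
    simp [mul_assoc]
  rw [expand]
  congr 1; funext i
  have expand2 : v i ⬝ᵥ (∑ j, d j • v j) = ∑ j, d j * (v i ⬝ᵥ v j) := by
    simp only [dotProduct, Finset.sum_apply, Pi.smul_apply, smul_eq_mul,
      Finset.mul_sum]
    rw [Finset.sum_comm]
    congr 1; funext j
    congr 1; funext x
    ring
  rw [expand2]
  simp [hv, mul_ite]

lemma dot_li {k N : ℕ} {v : Fin k → Fin N → ℝ}
    (hv : ∀ i j, v i ⬝ᵥ v j = if i = j then (1:ℝ) else 0) :
    LinearIndependent ℝ v := by
  rw [Fintype.linearIndependent_iff]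
  intro g hg j
  have h0 : (∑ i, g i • v i) ⬝ᵥ (∑ i, (if i = j then (1:ℝ) else 0) • v i) = g j := by
    rw [dot_sum_sum hv]
    simp
  rw [hg] at h0
  simpa using h0.symm

lemma dot_pos {N : ℕ} {x : Fin N → ℝ} (hx : x ≠ 0) : 0 < x ⬝ᵥ x := by
  obtain ⟨i0, hi0⟩ := Function.ne_iff.mp hx
  exact Finset.sum_pos' (fun i _ => mul_self_nonneg _)
    ⟨i0, Finset.mem_univ _, mul_self_pos.mpr hi0⟩

/-- The key dimension-counting lemma. -/
lemma key {N k l : ℕ} (B : Matrix (Fin N) (Fin N) ℝ)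
    (v : Fin k → Fin N → ℝ) (w : Fin l → Fin N → ℝ)
    (hv : ∀ i j, v i ⬝ᵥ v j = if i = j then (1:ℝ) else 0)
    (hw : ∀ i j, w i ⬝ᵥ w j = if i = j then (1:ℝ) else 0)
    {α β : ℝ}
    (hvQ : ∀ c : Fin k → ℝ,
      α * ((∑ i, c i • v i) ⬝ᵥ (∑ i, c i • v i)) ≤ (B *ᵥ (∑ i, c i • v i)) ⬝ᵥ (∑ i, c i • v i))
    (hwQ : ∀ c : Fin l → ℝ,
      (B *ᵥ (∑ i, c i • w i)) ⬝ᵥ (∑ i, c i • w i) ≤ β * ((∑ i, c i • w i) ⬝ᵥ (∑ i, c i • w i)))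
    (hdim : N < k + l) : α ≤ β := by
  set U : Submodule ℝ (Fin N → ℝ) := Submodule.span ℝ (Set.range v) with hU
  set V : Submodule ℝ (Fin N → ℝ) := Submodule.span ℝ (Set.range w) with hV
  have hdU : finrank ℝ U = k := by
    rw [hU, finrank_span_eq_card (dot_li hv), Fintype.card_fin]
  have hdV : finrank ℝ V = l := by
    rw [hV, finrank_span_eq_card (dot_li hw), Fintype.card_fin]
  have hsum := Submodule.finrank_sup_add_finrank_inf_eq U V
  have hle : finrank ℝ ↥(U ⊔ V) ≤ N := by
    have := Submodule.finrank_le (U ⊔ V)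
    simpa [Module.finrank_pi] using this
  have hpos : 0 < finrank ℝ ↥(U ⊓ V) := by omega
  have : Nontrivial ↥(U ⊓ V) := Module.nontrivial_of_finrank_pos hpos
  obtain ⟨⟨x, hxUV⟩, hxne⟩ := exists_ne (0 : ↥(U ⊓ V))
  have hx0 : x ≠ 0 := by
    intro h; apply hxne; ext; simp [h]
  obtain ⟨c, hc⟩ := (mem_span_range_iff_exists_fun ℝ).mp hxUV.1
  obtain ⟨d, hd⟩ := (mem_span_range_iff_exists_fun ℝ).mp hxUV.2
  have h1 := hvQ c
  have h2 := hwQ d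
  rw [hc] at h1
  rw [hd] at h2
  have hxx := dot_pos hx0
  have : α * (x ⬝ᵥ x) ≤ β * (x ⬝ᵥ x) := le_trans h1 h2
  exact le_of_mul_le_mul_right (by linarith) hxx

/-- Lower bound of the quadratic form on the span of eigenvectors. -/
lemma eig_low {N k : ℕ} (B : Matrix (Fin N) (Fin N) ℝ)
    (v : Fin k → Fin N → ℝ) (μ : Fin k → ℝ)
    (hv : ∀ i j, v i ⬝ᵥ v j = if i = j then (1:ℝ) else 0)
    (heig : ∀ i, B *ᵥ v i = μ i • v i) {α : ℝ} (hα : ∀ i, α ≤ μ i) (c : Fin k → ℝ) :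
    α * ((∑ i, c i • v i) ⬝ᵥ (∑ i, c i • v i)) ≤ (B *ᵥ (∑ i, c i • v i)) ⬝ᵥ (∑ i, c i • v i) := by
  have hmv : B *ᵥ (∑ i, c i • v i) = ∑ i, (c i * μ i) • v i := by
    rw [show (B *ᵥ ∑ i, c i • v i) = B.mulVecLin (∑ i, c i • v i) from rfl, map_sum]
    congr 1; funext i
    rw [_root_.map_smul]
    simp only [mulVecLin_apply, heig i, smul_smul]
  rw [hmv, dot_sum_sum hv, dot_sum_sum hv, Finset.mul_sum]
  apply Finset.sum_le_sum
  intro i _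
  have h1 : α * (c i * c i) ≤ μ i * (c i * c i) :=
    mul_le_mul_of_nonneg_right (hα i) (mul_self_nonneg _)
  nlinarith [h1]

/-- Upper bound of the quadratic form on the span of eigenvectors. -/
lemma eig_high {N k : ℕ} (B : Matrix (Fin N) (Fin N) ℝ)
    (v : Fin k → Fin N → ℝ) (μ : Fin k → ℝ)
    (hv : ∀ i j, v i ⬝ᵥ v j = if i = j then (1:ℝ) else 0)
    (heig : ∀ i, B *ᵥ v i = μ i • v i) {β : ℝ} (hβ : ∀ i, μ i ≤ β) (c : Fin k → ℝ) :
    (B *ᵥ (∑ i, c i • v i)) ⬝ᵥ (∑ i, c i • v i) ≤ β * ((∑ i, c i • v i) ⬝ᵥ (∑ i, c i • v i)) := by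
  have hmv : B *ᵥ (∑ i, c i • v i) = ∑ i, (c i * μ i) • v i := by
    rw [show (B *ᵥ ∑ i, c i • v i) = B.mulVecLin (∑ i, c i • v i) from rfl, map_sum]
    congr 1; funext i
    rw [_root_.map_smul]
    simp only [mulVecLin_apply, heig i, smul_smul]
  rw [hmv, dot_sum_sum hv, dot_sum_sum hv, Finset.mul_sum]
  apply Finset.sum_le_sum
  intro i _
  have h1 : μ i * (c i * c i) ≤ β * (c i * c i) :=
    mul_le_mul_of_nonneg_right (hβ i) (mul_self_nonneg _)
  nlinarith [h1]

/-- Padding a vector with a zero last coordinate, as a linear map. -/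
noncomputable def padL (N : ℕ) : (Fin N → ℝ) →ₗ[ℝ] (Fin (N+1) → ℝ) where
  toFun x := Fin.snoc x 0
  map_add' x y := by
    funext i
    refine Fin.lastCases ?_ ?_ i <;> simp
  map_smul' a x := by
    funext i
    refine Fin.lastCases ?_ ?_ i <;> simp

lemma dot_pad {N : ℕ} (y z : Fin N → ℝ) : padL N y ⬝ᵥ padL N z = y ⬝ᵥ z := by
  simp only [dotProduct, padL, LinearMap.coe_mk, AddHom.coe_mk]
  rw [Fin.sum_univ_castSucc]
  simp

lemma quad_pad {N : ℕ} (B : Matrix (Fin (N+1)) (Fin (N+1)) ℝ)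
    (C : Matrix (Fin N) (Fin N) ℝ)
    (hsub : ∀ i j, C i j = B i.castSucc j.castSucc) (y z : Fin N → ℝ) :
    (B *ᵥ padL N y) ⬝ᵥ padL N z = (C *ᵥ y) ⬝ᵥ z := by
  simp only [dotProduct, padL, LinearMap.coe_mk, AddHom.coe_mk]
  rw [Fin.sum_univ_castSucc]
  simp only [Fin.snoc_castSucc, Fin.snoc_last, mul_zero, add_zero]
  congr 1; funext i
  congr 1
  simp only [Matrix.mulVec, dotProduct]
  rw [Fin.sum_univ_castSucc]
  simp [hsub]

/-- The sorted eigenvalues of a Hermitian real matrix. -/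
noncomputable def sortedEig {N : ℕ} {M : Matrix (Fin N) (Fin N) ℝ} (hM : M.IsHermitian) :
    Fin N → ℝ :=
  hM.eigenvalues ∘ Tuple.sort hM.eigenvalues

/-- Sorted eigenvector family (as plain functions). -/
noncomputable def sortedVec {N : ℕ} {M : Matrix (Fin N) (Fin N) ℝ} (hM : M.IsHermitian) :
    Fin N → Fin N → ℝ :=
  fun j => ⇑(hM.eigenvectorBasis (Tuple.sort hM.eigenvalues j))

lemma sortedEig_mono {N : ℕ} {M : Matrix (Fin N) (Fin N) ℝ} (hM : M.IsHermitian) :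
    Monotone (sortedEig hM) :=
  Tuple.monotone_sort hM.eigenvalues

lemma sortedVec_eig {N : ℕ} {M : Matrix (Fin N) (Fin N) ℝ} (hM : M.IsHermitian) (j : Fin N) :
    M *ᵥ sortedVec hM j = sortedEig hM j • sortedVec hM j :=
  hM.mulVec_eigenvectorBasis _

lemma sortedVec_orth {N : ℕ} {M : Matrix (Fin N) (Fin N) ℝ} (hM : M.IsHermitian) :
    ∀ i j, sortedVec hM i ⬝ᵥ sortedVec hM j = if i = j then (1:ℝ) else 0 := by
  intro i j
  have h := (orthonormal_iff_ite.mp hM.eigenvectorBasis.orthonormal)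
    (Tuple.sort hM.eigenvalues i) (Tuple.sort hM.eigenvalues j)
  rw [PiLp.inner_apply] at h
  simp only [RCLike.inner_apply, starRingEnd_apply, star_trivial,
    EmbeddingLike.apply_eq_iff_eq] at h
  simpa [dotProduct, sortedVec, mul_comm] using h

/-- Cauchy interlacing for a principal `N × N` submatrix of an `(N+1) × (N+1)`
real symmetric matrix. -/
lemma interlace {N : ℕ} {B : Matrix (Fin (N+1)) (Fin (N+1)) ℝ} (hB : B.IsHermitian)
    {C : Matrix (Fin N) (Fin N) ℝ} (hC : C.IsHermitian)
    (hsub : ∀ i j, C i j = B i.castSucc j.castSucc) (i : Fin N) :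
    sortedEig hB i.castSucc ≤ sortedEig hC i ∧ sortedEig hC i ≤ sortedEig hB i.succ := by
  set u := sortedVec hB
  set v := sortedVec hC
  have hu := sortedVec_orth hB
  have hvo := sortedVec_orth hC
  have hpado : ∀ a b, padL N (v a) ⬝ᵥ padL N (v b) = if a = b then (1:ℝ) else 0 := by
    intro a b; rw [dot_pad]; exact hvo a b
  have hiv : i.val < N := i.isLt
  constructor
  · -- σ (i.castSucc) ≤ λ i
    -- lower family: tail of u starting at i.val, size N + 1 - i.val
    have h1lt : ∀ j : Fin (N + 1 - i.val), i.val + j.val < N + 1 := fun j => by omega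
    set fU : Fin (N + 1 - i.val) → Fin (N+1) → ℝ := fun j => u ⟨i.val + j.val, h1lt j⟩ with hfU
    -- upper family: padded head of v, size i.val + 1
    have h2le : i.val + 1 ≤ N := by omega
    set fV : Fin (i.val + 1) → Fin (N+1) → ℝ :=
      fun j => padL N (v (Fin.castLE h2le j)) with hfV
    refine key B fU fV ?_ ?_ ?_ ?_ ?_
    · intro a b
      rw [hfU]
      rw [hu]
      congr 1
      simp only [Fin.mk.injEq, eq_iff_iff, Fin.ext_iff]
      omega
    · intro a b
      rw [hfV, hpado]
      congr 1
      simp only [eq_iff_iff, Fin.ext_iff, Fin.coe_castLE]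
    · intro c
      refine eig_low B fU (fun j => sortedEig hB ⟨i.val + j.val, h1lt j⟩) ?_ ?_ ?_ c
      · intro a b
        rw [hfU, hu]
        congr 1
        simp only [Fin.mk.injEq, eq_iff_iff, Fin.ext_iff]
        omega
      · intro j; exact sortedVec_eig hB _
      · intro j
        apply sortedEig_mono hB
        simp only [Fin.le_def, Fin.coe_castSucc, Fin.val_mk]
        omega
    · intro c
      have hrw : ∀ d : Fin (i.val + 1) → ℝ,
          (∑ j, d j • fV j) = padL N (∑ j, d j • v (Fin.castLE h2le j)) := by
        intro d
        rw [map_sum]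
        congr 1; funext j
        rw [_root_.map_smul]
      rw [hrw c, quad_pad B C hsub, dot_pad]
      refine eig_high C (fun j => v (Fin.castLE h2le j))
        (fun j => sortedEig hC (Fin.castLE h2le j)) ?_ ?_ ?_ c
      · intro a b
        rw [hvo]
        congr 1
        simp only [eq_iff_iff, Fin.ext_iff, Fin.coe_castLE]
      · intro j; exact sortedVec_eig hC _
      · intro j
        apply sortedEig_mono hC
        have := j.isLt
        simp only [Fin.le_def, Fin.coe_castLE]
        omega
    · omega
  · -- λ i ≤ σ (i.succ)
    -- lower family: padded tail of v starting at i.val, size N - i.val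
    have h1lt : ∀ j : Fin (N - i.val), i.val + j.val < N := fun j => by omega
    set fV : Fin (N - i.val) → Fin (N+1) → ℝ :=
      fun j => padL N (v ⟨i.val + j.val, h1lt j⟩) with hfV
    -- upper family: head of u, size i.val + 2
    have h2le : i.val + 2 ≤ N + 1 := by omega
    set fU : Fin (i.val + 2) → Fin (N+1) → ℝ := fun j => u (Fin.castLE h2le j) with hfU
    refine key B fV fU ?_ ?_ ?_ ?_ ?_
    · intro a b
      rw [hfV, hpado]
      congr 1
      simp only [Fin.mk.injEq, eq_iff_iff, Fin.ext_iff]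
      omega
    · intro a b
      rw [hfU, hu]
      congr 1
      simp only [eq_iff_iff, Fin.ext_iff, Fin.coe_castLE]
    · intro c
      have hrw : ∀ d : Fin (N - i.val) → ℝ,
          (∑ j, d j • fV j) = padL N (∑ j, d j • v ⟨i.val + j.val, h1lt j⟩) := by
        intro d
        rw [map_sum]
        congr 1; funext j
        rw [_root_.map_smul]
      rw [hrw c, quad_pad B C hsub, dot_pad]
      refine eig_low C (fun j => v ⟨i.val + j.val, h1lt j⟩)
        (fun j => sortedEig hC ⟨i.val + j.val, h1lt j⟩) ?_ ?_ ?_ c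
      · intro a b
        rw [hvo]
        congr 1
        simp only [Fin.mk.injEq, eq_iff_iff, Fin.ext_iff]
        omega
      · intro j; exact sortedVec_eig hC _
      · intro j
        apply sortedEig_mono hC
        simp only [Fin.le_def, Fin.val_mk]
        omega
    · intro c
      refine eig_high B fU (fun j => sortedEig hB (Fin.castLE h2le j)) ?_ ?_ ?_ c
      · intro a b
        rw [hfU, hu]
        congr 1
        simp only [eq_iff_iff, Fin.ext_iff, Fin.coe_castLE]
      · intro j; exact sortedVec_eig hB _
      · intro j
        apply sortedEig_mono hB
        have := j.isLt
        simp only [Fin.le_def, Fin.coe_castLE, Fin.val_succ]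
        omega
    · omega

end SVDInterlace

/-- The singular values of a real `p × q` matrix `M` (`p ≤ q`): the square roots of the
eigenvalues of `M * Mᵀ`, listed in nondecreasing order. -/
noncomputable def singularValues {p q : ℕ} (M : Matrix (Fin p) (Fin q) ℝ) : Fin p → ℝ :=
  fun i =>
    Real.sqrt (((Matrix.isHermitian_mul_conjTranspose_self M).eigenvalues ∘
      Tuple.sort (Matrix.isHermitian_mul_conjTranspose_self M).eigenvalues) i)

theorem stmt4 (n m : ℕ) (hnm : n + 1 ≤ m)
    (A : Matrix (Fin n) (Fin m) ℝ) (A' : Matrix (Fin (n + 1)) (Fin m) ℝ)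
    (hrows : ∀ i : Fin n, A' i.castSucc = A i) :
    ∀ i : Fin n, singularValues A' i.castSucc ≤ singularValues A i ∧
      singularValues A i ≤ singularValues A' i.succ := by
  intro i
  have hsub : ∀ a b, (A * Aᴴ) a b = (A' * A'ᴴ) a.castSucc b.castSucc := by
    intro a b
    simp [Matrix.mul_apply, Matrix.conjTranspose_apply, hrows]
  have h := SVDInterlace.interlace (Matrix.isHermitian_mul_conjTranspose_self A')
    (Matrix.isHermitian_mul_conjTranspose_self A) hsub i
  unfold singularValues
  exact ⟨Real.sqrt_le_sqrt h.1, Real.sqrt_le_sqrt h.2⟩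
end

section
/- Let p₁, …, p_k ≥ 0 with Σᵢ pᵢ = 1, and let three balls be thrown independently into k bins, each ball landing in bin i with probability pᵢ. For two distinct balls a, b let C_{a,b} be the indicator that balls a and b land in the same bin, and set E := E[C_{a,b}] = Σᵢ pᵢ². Then for any three distinct balls a, b, c: E[(C_{a,b} − E)(C_{a,c} − E)] = Σᵢ pᵢ³ − (Σᵢ pᵢ²)² ≤ (Σᵢ pᵢ²)^{3/2}. -/
open MeasureTheory

private def tripleEquiv (k : ℕ) : (Fin k × Fin k × Fin k) ≃ (Fin 3 → Fin k) where
  toFun q := ![q.1, q.2.1, q.2.2]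
  invFun g := (g 0, g 1, g 2)
  left_inv q := by simp
  right_inv g := by funext j; fin_cases j <;> simp

private lemma sum3 {k : ℕ} (F : Fin k → Fin k → Fin k → ℝ) :
    ∑ g : Fin 3 → Fin k, F (g 0) (g 1) (g 2) = ∑ x, ∑ y, ∑ z, F x y z := by
  rw [← Fintype.sum_equiv (tripleEquiv k) (fun q => F q.1 q.2.1 q.2.2)
      (fun g => F (g 0) (g 1) (g 2)) (fun q => by simp [tripleEquiv])]
  rw [Fintype.sum_prod_type]
  simp [Fintype.sum_prod_type]

private lemma int_eq {k : ℕ} (p : Fin k → ℝ) (hp : ∀ i, 0 ≤ p i)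
    (μ₁ : Measure (Fin k)) (hμ : IsProbabilityMeasure μ₁)
    (hμp : ∀ i, μ₁ {i} = ENNReal.ofReal (p i))
    (a b c : Fin 3) (hab : a ≠ b) (hac : a ≠ c) (hbc : b ≠ c)
    (Φ : Fin k → Fin k → Fin k → ℝ) :
    ∫ f : Fin 3 → Fin k, Φ (f a) (f b) (f c) ∂(Measure.pi fun _ : Fin 3 => μ₁)
      = ∑ x, ∑ y, ∑ z, p x * p y * p z * Φ x y z := by
  have hinj : Function.Injective (![a, b, c] : Fin 3 → Fin 3) := by
    intro x y h
    fin_cases x <;> fin_cases y <;> simp_all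
  have hbij := (Finite.injective_iff_bijective).mp hinj
  let σ : Fin 3 ≃ Fin 3 := Equiv.ofBijective _ hbij
  have hσ0 : σ 0 = a := rfl
  have hσ1 : σ 1 = b := rfl
  have hσ2 : σ 2 = c := rfl
  have hμs : ∀ f : Fin 3 → Fin k,
      ((Measure.pi fun _ : Fin 3 => μ₁) {f}).toReal = ∏ j, p (f j) := by
    intro f
    have h1 : ({f} : Set (Fin 3 → Fin k)) = Set.univ.pi (fun j => ({f j} : Set (Fin k))) := by
      ext g; simp [funext_iff, Set.mem_pi, eq_comm]
    rw [h1, Measure.pi_pi]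
    rw [ENNReal.toReal_prod]
    exact Finset.prod_congr rfl fun j _ => by rw [hμp, ENNReal.toReal_ofReal (hp _)]
  rw [integral_fintype (Integrable.of_finite)]
  simp only [smul_eq_mul, Measure.real, hμs]
  have step1 : ∑ f : Fin 3 → Fin k, (∏ j, p (f j)) * Φ (f a) (f b) (f c)
      = ∑ g : Fin 3 → Fin k, (p (g 0) * p (g 1) * p (g 2)) * Φ (g 0) (g 1) (g 2) := by
    rw [← Fintype.sum_equiv (Equiv.arrowCongr σ (Equiv.refl (Fin k)))
      (fun g => (p (g 0) * p (g 1) * p (g 2)) * Φ (g 0) (g 1) (g 2))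
      (fun f => (∏ j, p (f j)) * Φ (f a) (f b) (f c))
      (fun g => ?_)]
    have ea : Equiv.arrowCongr σ (Equiv.refl (Fin k)) g a = g 0 := by
      simp [Equiv.arrowCongr, ← hσ0]
    have eb : Equiv.arrowCongr σ (Equiv.refl (Fin k)) g b = g 1 := by
      simp [Equiv.arrowCongr, ← hσ1]
    have ec : Equiv.arrowCongr σ (Equiv.refl (Fin k)) g c = g 2 := by
      simp [Equiv.arrowCongr, ← hσ2]
    have eprod : ∏ j, p (Equiv.arrowCongr σ (Equiv.refl (Fin k)) g j) = ∏ j, p (g j) := by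
      have := Equiv.prod_comp σ.symm (fun j => p (g j))
      simpa [Equiv.arrowCongr] using this
    rw [ea, eb, ec, eprod, Fin.prod_univ_three]
  rw [step1, sum3 (fun x y z => (p x * p y * p z) * Φ x y z)]

theorem stmt13 (k : ℕ) (p : Fin k → ℝ) (hp : ∀ i, 0 ≤ p i) (hsum : ∑ i, p i = 1)
    (μ₁ : Measure (Fin k)) (hμ : IsProbabilityMeasure μ₁)
    (hμp : ∀ i, μ₁ {i} = ENNReal.ofReal (p i))
    (a b c : Fin 3) (hab : a ≠ b) (hac : a ≠ c) (hbc : b ≠ c) :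
    (∫ f : Fin 3 → Fin k, (if f a = f b then (1:ℝ) else 0)
        ∂(Measure.pi fun _ : Fin 3 => μ₁) = ∑ i, p i ^ 2) ∧
    (∫ f : Fin 3 → Fin k,
        ((if f a = f b then (1:ℝ) else 0) - ∑ i, p i ^ 2) *
          ((if f a = f c then (1:ℝ) else 0) - ∑ i, p i ^ 2)
        ∂(Measure.pi fun _ : Fin 3 => μ₁)
      = ∑ i, p i ^ 3 - (∑ i, p i ^ 2) ^ 2) ∧
    ∑ i, p i ^ 3 - (∑ i, p i ^ 2) ^ 2 ≤ (∑ i, p i ^ 2) ^ ((3:ℝ) / 2) := by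
  have key := int_eq p hp μ₁ hμ hμp a b c hab hac hbc
  set E := ∑ i, p i ^ 2 with hE
  -- the four basic sums
  have S4 : ∑ x, ∑ y, ∑ z, p x * p y * p z = 1 := by
    simp only [mul_assoc, ← Finset.mul_sum, hsum, mul_one]
  have S2 : ∑ x, ∑ y, ∑ z, p x * p y * p z * (if x = y then (1:ℝ) else 0) = E := by
    have inner : ∀ x y : Fin k, ∑ z, p x * p y * p z * (if x = y then (1:ℝ) else 0)
        = p x * p y * (if x = y then (1:ℝ) else 0) := by
      intro x y
      rw [Finset.sum_congr rfl
        (fun z _ => (by ring : p x * p y * p z * (if x = y then (1:ℝ) else 0)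
          = (p x * p y * (if x = y then (1:ℝ) else 0)) * p z)),
        ← Finset.mul_sum, hsum, mul_one]
    simp only [inner]
    simp only [mul_ite, mul_one, mul_zero, Finset.sum_ite_eq, Finset.mem_univ, if_true, hE]
    exact Finset.sum_congr rfl fun x _ => by ring
  have S3 : ∑ x, ∑ y, ∑ z, p x * p y * p z * (if x = z then (1:ℝ) else 0) = E := by
    have inner : ∀ x y : Fin k, ∑ z, p x * p y * p z * (if x = z then (1:ℝ) else 0)
        = p x * p y * p x := by
      intro x y
      simp [mul_ite, Finset.sum_ite_eq]
    simp only [inner]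
    have inner2 : ∀ x : Fin k, ∑ y, p x * p y * p x = p x ^ 2 := by
      intro x
      rw [Finset.sum_congr rfl (fun y _ => (by ring : p x * p y * p x = (p x * p x) * p y)),
        ← Finset.mul_sum, hsum, mul_one]; ring
    simp only [inner2, hE]
  have S1 : ∑ x, ∑ y, ∑ z, p x * p y * p z *
      ((if x = y then (1:ℝ) else 0) * (if x = z then (1:ℝ) else 0)) = ∑ i, p i ^ 3 := by
    have inner : ∀ x y : Fin k, ∑ z, p x * p y * p z *
        ((if x = y then (1:ℝ) else 0) * (if x = z then (1:ℝ) else 0))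
        = p x * p y * p x * (if x = y then (1:ℝ) else 0) := by
      intro x y
      simp [mul_ite, ite_mul, Finset.sum_ite_eq, mul_comm]
    simp only [inner, mul_ite, mul_one, mul_zero, Finset.sum_ite_eq, Finset.mem_univ, if_true]
    exact Finset.sum_congr rfl fun x _ => by ring
  -- first integral
  have I1 : ∫ f : Fin 3 → Fin k, (if f a = f b then (1:ℝ) else 0)
      ∂(Measure.pi fun _ : Fin 3 => μ₁) = E := by
    rw [key (fun x y _ => if x = y then (1:ℝ) else 0), S2]
  -- second integral
  have I2 : ∫ f : Fin 3 → Fin k,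
      ((if f a = f b then (1:ℝ) else 0) - E) * ((if f a = f c then (1:ℝ) else 0) - E)
      ∂(Measure.pi fun _ : Fin 3 => μ₁) = ∑ i, p i ^ 3 - E ^ 2 := by
    rw [key (fun x y z => ((if x = y then (1:ℝ) else 0) - E) *
      ((if x = z then (1:ℝ) else 0) - E))]
    have expand : ∑ x, ∑ y, ∑ z, p x * p y * p z *
        (((if x = y then (1:ℝ) else 0) - E) * ((if x = z then (1:ℝ) else 0) - E))
        = (∑ x, ∑ y, ∑ z, p x * p y * p z *
            ((if x = y then (1:ℝ) else 0) * (if x = z then (1:ℝ) else 0)))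
          - E * (∑ x, ∑ y, ∑ z, p x * p y * p z * (if x = y then (1:ℝ) else 0))
          - E * (∑ x, ∑ y, ∑ z, p x * p y * p z * (if x = z then (1:ℝ) else 0))
          + E * E * (∑ x, ∑ y, ∑ z, p x * p y * p z) := by
      simp only [Finset.mul_sum, ← Finset.sum_sub_distrib, ← Finset.sum_add_distrib]
      exact Finset.sum_congr rfl fun x _ => Finset.sum_congr rfl fun y _ =>
        Finset.sum_congr rfl fun z _ => by ring
    rw [expand, S1, S2, S3, S4]; ring
  -- inequality
  have hE0 : 0 ≤ E := Finset.sum_nonneg fun i _ => sq_nonneg _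
  have hEpos : 0 < E := by
    rcases lt_or_eq_of_le hE0 with h | h
    · exact h
    · exfalso
      have hz : ∀ i, p i = 0 := by
        intro i
        have h2 : p i ^ 2 = 0 := by
          have := Finset.sum_eq_zero_iff_of_nonneg (fun j _ => sq_nonneg (p j)) |>.mp h.symm
          exact this i (Finset.mem_univ i)
        exact pow_eq_zero_iff (by norm_num) |>.mp h2
      simp [hz] at hsum
  have hsqrt : ∀ i, p i ≤ Real.sqrt E := by
    intro i
    calc p i = Real.sqrt (p i ^ 2) := (Real.sqrt_sq (hp i)).symm
    _ ≤ Real.sqrt E := Real.sqrt_le_sqrt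
        (Finset.single_le_sum (fun j _ => sq_nonneg (p j)) (Finset.mem_univ i))
  have hcube : ∑ i, p i ^ 3 ≤ E * Real.sqrt E := by
    calc ∑ i, p i ^ 3 ≤ ∑ i, p i ^ 2 * Real.sqrt E := by
          refine Finset.sum_le_sum fun i _ => ?_
          have : p i ^ 3 = p i ^ 2 * p i := by ring
          rw [this]
          exact mul_le_mul_of_nonneg_left (hsqrt i) (sq_nonneg _)
    _ = E * Real.sqrt E := by rw [← Finset.sum_mul]
  have hrpow : E ^ ((3:ℝ)/2) = E * Real.sqrt E := by
    rw [show ((3:ℝ)/2) = 1 + 1/2 by norm_num, Real.rpow_add hEpos, Real.rpow_one,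
      Real.sqrt_eq_rpow]
  refine ⟨I1, I2, ?_⟩
  rw [hrpow]
  nlinarith [sq_nonneg E]
end

section
/- Let p₁, …, p_k ≥ 0 with Σᵢ pᵢ = 1, let d ≥ 3 balls be thrown independently into k bins (each ball landing in bin i with probability pᵢ), let C_{i,j} be the indicator that balls i and j land in the same bin, and let C := Σ_{1 ≤ i < j ≤ d} C_{i,j}. If E[C] = (d(d−1)/2)·Σᵢ pᵢ² ≥ 1, then Var[C] ≤ 4·(E[C])^{3/2}. -/
open MeasureTheory


section Aux

lemma key_sum {k d : ℕ} (q : Fin d → Fin k → ℝ) :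
    ∑ f : Fin d → Fin k, ∏ l, q l (f l) = ∏ l, ∑ a, q l a := by
  rw [Finset.prod_univ_sum, Fintype.piFinset_univ]

lemma moment2 {k d : ℕ} (p : Fin k → ℝ) (hsum : ∑ i, p i = 1)
    (s t : Finset (Fin d)) (hst : Disjoint s t) (a b : Fin k) :
    ∑ f : Fin d → Fin k, (∏ l, p (f l)) *
      ((∏ l ∈ s, if f l = a then (1:ℝ) else 0) * (∏ l ∈ t, if f l = b then (1:ℝ) else 0))
    = p a ^ s.card * p b ^ t.card := by
  have h1 : ∀ f : Fin d → Fin k, (∏ l, p (f l)) *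
      ((∏ l ∈ s, if f l = a then (1:ℝ) else 0) * (∏ l ∈ t, if f l = b then (1:ℝ) else 0))
      = ∏ l, (p (f l) * ((if l ∈ s then (if f l = a then (1:ℝ) else 0) else 1) *
          (if l ∈ t then (if f l = b then (1:ℝ) else 0) else 1))) := by
    intro f
    rw [Finset.prod_mul_distrib, Finset.prod_mul_distrib, Finset.prod_ite_mem,
      Finset.prod_ite_mem, Finset.univ_inter, Finset.univ_inter]
  rw [Finset.sum_congr rfl fun f _ => h1 f, key_sum (fun l c => p c * ((if l ∈ s then (if c = a then (1:ℝ) else 0) else 1) * (if l ∈ t then (if c = b then (1:ℝ) else 0) else 1)))]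
  have h2 : ∀ l : Fin d, (∑ c, p c * ((if l ∈ s then (if c = a then (1:ℝ) else 0) else 1) *
      (if l ∈ t then (if c = b then (1:ℝ) else 0) else 1)))
      = (if l ∈ s then p a else 1) * (if l ∈ t then p b else 1) := by
    intro l
    by_cases hls : l ∈ s <;> by_cases hlt : l ∈ t
    · exact absurd (hst.forall_ne_finset hls hlt rfl) (by simp)
    · simp [hls, hlt, mul_ite, Finset.sum_ite_eq']
    · simp [hls, hlt, mul_ite, Finset.sum_ite_eq']
    · simp [hls, hlt, hsum]
  simp_rw [h2]
  rw [Finset.prod_mul_distrib, Finset.prod_ite_mem, Finset.prod_ite_mem,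
    Finset.univ_inter, Finset.univ_inter, Finset.prod_const, Finset.prod_const]

lemma moment1 {k d : ℕ} (p : Fin k → ℝ) (hsum : ∑ i, p i = 1)
    (s : Finset (Fin d)) (a : Fin k) :
    ∑ f : Fin d → Fin k, (∏ l, p (f l)) * ∏ l ∈ s, (if f l = a then (1:ℝ) else 0)
      = p a ^ s.card := by
  have := moment2 p hsum s ∅ (Finset.disjoint_empty_right _) a a
  simpa using this

lemma ind_pair {k d : ℕ} (i j : Fin d) (f : Fin d → Fin k) :
    (if f i = f j then (1:ℝ) else 0)
      = ∑ a, ∏ l ∈ ({i,j} : Finset (Fin d)), (if f l = a then (1:ℝ) else 0) := by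
  simp_rw [Finset.prod_boole]
  by_cases h : f i = f j
  · rw [Finset.sum_eq_single (f i)]
    · have : ∀ l ∈ ({i,j} : Finset (Fin d)), f l = f i := by
        intro l hl
        rcases Finset.mem_insert.1 hl with rfl | hl
        · rfl
        · rw [Finset.mem_singleton.1 hl, ← h]
      rw [if_pos h, if_pos this]
    · intro a _ ha
      rw [if_neg]
      intro hall
      exact ha (hall i (by simp)).symm
    · simp
  · rw [if_neg h, eq_comm]
    apply Finset.sum_eq_zero
    intro a _
    rw [if_neg]
    intro hall
    exact h ((hall i (by simp)).trans (hall j (by simp)).symm)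

lemma pairval {d k : ℕ} (f : Fin d → Fin k) (x y w : Fin d) (hxy : f x = f y)
    (hw : w ∈ ({x,y} : Finset (Fin d))) : ∀ l ∈ ({x,y} : Finset (Fin d)), f l = f w := by
  intro l hl
  simp only [Finset.mem_insert, Finset.mem_singleton] at hw hl
  rcases hw with rfl | rfl <;> rcases hl with rfl | rfl <;>
    first | rfl | exact hxy | exact hxy.symm

lemma ind_share {k d : ℕ} (i j i' j' v : Fin d) (hv1 : v ∈ ({i,j} : Finset (Fin d)))
    (hv2 : v ∈ ({i',j'} : Finset (Fin d))) (f : Fin d → Fin k) :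
    (if f i = f j then (1:ℝ) else 0) * (if f i' = f j' then 1 else 0)
      = ∑ a, ∏ l ∈ (({i,j} : Finset (Fin d)) ∪ {i',j'}), (if f l = a then (1:ℝ) else 0) := by
  simp_rw [Finset.prod_boole]
  by_cases h : f i = f j ∧ f i' = f j'
  · obtain ⟨h1, h2⟩ := h
    rw [Finset.sum_eq_single (f v)]
    · have : ∀ l ∈ (({i,j} : Finset (Fin d)) ∪ {i',j'}), f l = f v := by
        intro l hl
        rcases Finset.mem_union.1 hl with hl | hl
        · exact pairval f i j v h1 hv1 l hl
        · exact pairval f i' j' v h2 hv2 l hl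
      rw [if_pos h1, if_pos h2, if_pos this, one_mul]
    · intro a _ ha
      rw [if_neg]
      intro hall
      exact ha (hall v (Finset.mem_union.2 (Or.inl hv1))).symm
    · simp
  · have hz : (if f i = f j then (1:ℝ) else 0) * (if f i' = f j' then 1 else 0) = 0 := by
      rcases not_and_or.1 h with h' | h' <;> simp [h']
    rw [hz, eq_comm]
    apply Finset.sum_eq_zero
    intro a _
    rw [if_neg]
    intro hall
    exact h ⟨(hall i (by simp)).trans (hall j (by simp)).symm,
      (hall i' (by simp)).trans (hall j' (by simp)).symm⟩

lemma G_union {k d : ℕ} (p : Fin k → ℝ) (hsum : ∑ i, p i = 1) (i j i' j' v : Fin d)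
    (hv1 : v ∈ ({i, j} : Finset (Fin d))) (hv2 : v ∈ ({i', j'} : Finset (Fin d))) :
    ∑ f : Fin d → Fin k, (∏ l, p (f l)) *
        ((if f i = f j then (1:ℝ) else 0) * (if f i' = f j' then 1 else 0))
      = ∑ a, p a ^ ((({i, j} : Finset (Fin d)) ∪ {i', j'}).card) := by
  have h1 : ∀ f : Fin d → Fin k, (∏ l, p (f l)) *
      ((if f i = f j then (1:ℝ) else 0) * (if f i' = f j' then 1 else 0))
      = ∑ a, (∏ l, p (f l)) *
          ∏ l ∈ (({i,j} : Finset (Fin d)) ∪ {i',j'}), (if f l = a then (1:ℝ) else 0) := by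
    intro f
    rw [ind_share i j i' j' v hv1 hv2 f, Finset.mul_sum]
  rw [Finset.sum_congr rfl fun f _ => h1 f, Finset.sum_comm]
  exact Finset.sum_congr rfl fun a _ => moment1 p hsum _ a

lemma G_disj {k d : ℕ} (p : Fin k → ℝ) (hsum : ∑ i, p i = 1) (i j i' j' : Fin d)
    (hdisj : Disjoint ({i,j} : Finset (Fin d)) {i',j'}) :
    ∑ f : Fin d → Fin k, (∏ l, p (f l)) *
        ((if f i = f j then (1:ℝ) else 0) * (if f i' = f j' then 1 else 0))
      = (∑ a, p a ^ (({i,j} : Finset (Fin d)).card)) *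
        (∑ a, p a ^ (({i',j'} : Finset (Fin d)).card)) := by
  have h1 : ∀ f : Fin d → Fin k, (∏ l, p (f l)) *
      ((if f i = f j then (1:ℝ) else 0) * (if f i' = f j' then 1 else 0))
      = ∑ a, ∑ b, (∏ l, p (f l)) *
          ((∏ l ∈ ({i,j} : Finset (Fin d)), if f l = a then (1:ℝ) else 0) *
           (∏ l ∈ ({i',j'} : Finset (Fin d)), if f l = b then (1:ℝ) else 0)) := by
    intro f
    rw [ind_pair i j f, ind_pair i' j' f, Finset.sum_mul_sum, Finset.mul_sum]
    exact Finset.sum_congr rfl fun a _ => by rw [Finset.mul_sum]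
  rw [Finset.sum_congr rfl fun f _ => h1 f, Finset.sum_comm, Finset.sum_mul_sum]
  refine Finset.sum_congr rfl fun a _ => ?_
  rw [Finset.sum_comm]
  exact Finset.sum_congr rfl fun b _ => moment2 p hsum _ _ hdisj a b

lemma union_card3 {d : ℕ} (x y : Fin d × Fin d) (hx : x.1 < x.2) (hy : y.1 < y.2)
    (hne : x ≠ y) (hsh : x.1 = y.1 ∨ x.1 = y.2 ∨ x.2 = y.1 ∨ x.2 = y.2) :
    (({x.1, x.2} : Finset (Fin d)) ∪ {y.1, y.2}).card = 3 := by
  obtain ⟨a, b⟩ := x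
  obtain ⟨c, e⟩ := y
  simp only at hx hy hsh ⊢
  have tri : ∀ (u v w : Fin d), u ≠ v → u ≠ w → v ≠ w →
      ({u, v, w} : Finset (Fin d)).card = 3 := by
    intro u v w h1 h2 h3
    rw [Finset.card_insert_of_notMem (by simp [h1, h2]), Finset.card_pair h3]
  have hne' : ¬(a = c ∧ b = e) := by
    intro ⟨h1, h2⟩; exact hne (by simp [h1, h2, Prod.ext_iff])
  rcases hsh with h | h | h | h
  · subst h
    rw [show ({a, b} ∪ {a, e} : Finset (Fin d)) = {a, b, e} by ext t; simp only [Finset.mem_union, Finset.mem_insert, Finset.mem_singleton]; tauto]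
    exact tri a b e hx.ne (hy.ne) (fun hbe => hne' ⟨rfl, hbe⟩)
  · subst h
    rw [show ({a, b} ∪ {c, a} : Finset (Fin d)) = {a, b, c} by ext t; simp only [Finset.mem_union, Finset.mem_insert, Finset.mem_singleton]; tauto]
    exact tri a b c hx.ne hy.ne' (fun hbc => absurd (hbc ▸ hx) (by exact fun h' => absurd (h'.trans hy) (lt_irrefl _)))
  · subst h
    rw [show ({a, b} ∪ {b, e} : Finset (Fin d)) = {a, b, e} by ext t; simp only [Finset.mem_union, Finset.mem_insert, Finset.mem_singleton]; tauto]
    exact tri a b e hx.ne (fun hae => absurd (hae ▸ hx) (fun h' => absurd (hy.trans h') (lt_irrefl _))) hy.ne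
  · subst h
    rw [show ({a, b} ∪ {c, b} : Finset (Fin d)) = {a, b, c} by ext t; simp only [Finset.mem_union, Finset.mem_insert, Finset.mem_singleton]; tauto]
    exact tri a b c hx.ne (fun hac => hne' ⟨hac, rfl⟩) hy.ne'

end Aux

lemma two_mul_N (d : ℕ) :
    2 * (Finset.univ.filter fun x : Fin d × Fin d => x.1 < x.2).card + d = d * d := by
  classical
  have h1 : ∀ x : Fin d × Fin d, (1:ℕ) = (if x.1 < x.2 then 1 else 0)
      + ((if x.2 < x.1 then 1 else 0) + (if x.1 = x.2 then 1 else 0)) := by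
    intro x
    rcases lt_trichotomy x.1 x.2 with h | h | h
    · simp [h, h.ne, asymm h]
    · simp [h, lt_irrefl]
    · simp [h, h.ne', asymm h]
  have total : (d * d : ℕ) = ∑ _x : Fin d × Fin d, (1:ℕ) := by
    simp [Finset.card_univ]
  rw [Finset.sum_congr rfl fun x _ => h1 x] at total
  rw [Finset.sum_add_distrib, Finset.sum_add_distrib, ← Finset.card_filter,
    ← Finset.card_filter, ← Finset.card_filter] at total
  have hgt : (Finset.univ.filter fun x : Fin d × Fin d => x.2 < x.1).card
      = (Finset.univ.filter fun x : Fin d × Fin d => x.1 < x.2).card := by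
    apply Finset.card_bij (fun x _ => Prod.swap x)
    · intro a ha
      simp only [Finset.mem_filter, Finset.mem_univ, true_and] at *
      exact ha
    · intro a _ b _ h
      exact Prod.swap_injective h
    · intro b hb
      exact ⟨b.swap, by simpa using (Finset.mem_filter.1 hb).2, by simp⟩
  have hdiag : (Finset.univ.filter fun x : Fin d × Fin d => x.1 = x.2).card = d := by
    have : (Finset.univ.filter fun x : Fin d × Fin d => x.1 = x.2).card
        = (Finset.univ : Finset (Fin d)).card := by
      refine Finset.card_bij (fun (x : Fin d × Fin d) _ => x.1) ?_ ?_ ?_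
      · simp
      · intro a ha b hb h
        have h2 := (Finset.mem_filter.1 ha).2
        have h3 := (Finset.mem_filter.1 hb).2
        exact Prod.ext h (by rw [← h2, ← h3, h])
      · intro b _
        exact ⟨(b, b), by simp, rfl⟩
    simpa using this
  omega

lemma inner_card (d : ℕ) (g : Fin 2 → Fin d) :
    ((Finset.univ : Finset (Fin 2 × Fin d)).filter fun w => w.2 ≠ g w.1).card
      = 2 * (d - 1) := by
  classical
  rw [Finset.card_filter, Fintype.sum_prod_type]
  have h : ∀ a : Fin 2, (∑ b : Fin d, if b ≠ g a then (1:ℕ) else 0) = d - 1 := by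
    intro a
    rw [← Finset.card_filter, Finset.filter_ne' Finset.univ (g a),
      Finset.card_erase_of_mem (Finset.mem_univ _), Finset.card_univ, Fintype.card_fin]
  rw [Finset.sum_congr rfl fun a _ => h a, Finset.sum_const, Finset.card_univ,
    Fintype.card_fin, smul_eq_mul]

lemma recon {d : ℕ} (y : Fin d × Fin d) (v : Fin d) (hy : y.1 < y.2)
    (hvy : y.1 = v ∨ y.2 = v) :
    ((if y.1 = v then y.2 else y.1) ≠ v ∧
      y = (min v (if y.1 = v then y.2 else y.1),
           max v (if y.1 = v then y.2 else y.1))) := by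
  by_cases h1 : y.1 = v
  · rw [if_pos h1, ← h1, min_eq_left hy.le, max_eq_right hy.le]
    exact ⟨hy.ne', rfl⟩
  · have h2 : y.2 = v := hvy.resolve_left h1
    rw [if_neg h1, ← h2, min_eq_right hy.le, max_eq_left hy.le]
    exact ⟨hy.ne, rfl⟩

lemma countA (d : ℕ) :
    (((Finset.univ.filter fun x : Fin d × Fin d => x.1 < x.2) ×ˢ
        (Finset.univ.filter fun x : Fin d × Fin d => x.1 < x.2)).filter
      fun z => z.1 ≠ z.2 ∧
        (z.1.1 = z.2.1 ∨ z.1.1 = z.2.2 ∨ z.1.2 = z.2.1 ∨ z.1.2 = z.2.2)).card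
    ≤ (Finset.univ.filter fun x : Fin d × Fin d => x.1 < x.2).card * (2 * (d - 1)) := by
  classical
  set E := Finset.univ.filter fun x : Fin d × Fin d => x.1 < x.2 with hE
  set T := (E ×ˢ (Finset.univ : Finset (Fin 2 × Fin d))).filter
      (fun zw => zw.2.2 ≠ (if zw.2.1 = 0 then zw.1.1 else zw.1.2)) with hT
  have hTcard : T.card = E.card * (2 * (d - 1)) := by
    rw [hT, Finset.card_filter, Finset.sum_product]
    have : ∀ x : Fin d × Fin d,
        (∑ w : Fin 2 × Fin d, if w.2 ≠ (if w.1 = 0 then x.1 else x.2) then (1:ℕ) else 0)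
          = 2 * (d - 1) := by
      intro x
      rw [← Finset.card_filter]
      exact inner_card d (fun i => if i = 0 then x.1 else x.2)
    rw [Finset.sum_congr rfl fun x _ => this x, Finset.sum_const, smul_eq_mul]
  -- basic facts about members of the bad set
  have hmem : ∀ z ∈ ((E ×ˢ E).filter fun z : (Fin d × Fin d) × (Fin d × Fin d) =>
      z.1 ≠ z.2 ∧ (z.1.1 = z.2.1 ∨ z.1.1 = z.2.2 ∨ z.1.2 = z.2.1 ∨ z.1.2 = z.2.2)),
      z.1 ∈ E ∧ z.2.1 < z.2.2 ∧
        (z.2.1 = (if z.1.1 = z.2.1 ∨ z.1.1 = z.2.2 then z.1.1 else z.1.2) ∨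
         z.2.2 = (if z.1.1 = z.2.1 ∨ z.1.1 = z.2.2 then z.1.1 else z.1.2)) := by
    intro z hz
    obtain ⟨hzE, hne, hsh⟩ := Finset.mem_filter.1 hz
    obtain ⟨hx, hy⟩ := Finset.mem_product.1 hzE
    refine ⟨hx, (Finset.mem_filter.1 hy).2, ?_⟩
    by_cases hP : z.1.1 = z.2.1 ∨ z.1.1 = z.2.2
    · rw [if_pos hP]
      rcases hP with h | h
      exacts [Or.inl h.symm, Or.inr h.symm]
    · rw [if_neg hP]
      rcases hsh with h | h | h | h
      · exact absurd (Or.inl h) hP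
      · exact absurd (Or.inr h) hP
      · exact Or.inl h.symm
      · exact Or.inr h.symm
  refine le_trans (Finset.card_le_card_of_injOn
    (fun z => (z.1, ((if z.1.1 = z.2.1 ∨ z.1.1 = z.2.2 then (0:Fin 2) else 1),
       (if z.2.1 = (if z.1.1 = z.2.1 ∨ z.1.1 = z.2.2 then z.1.1 else z.1.2)
          then z.2.2 else z.2.1))))
    ?_ ?_) (le_of_eq hTcard)
  · intro z hz
    obtain ⟨hx, hy, hvy⟩ := hmem z hz
    have hrec := recon z.2 _ hy hvy
    rw [hT]
    refine Finset.mem_filter.2 ⟨Finset.mem_product.2 ⟨hx, Finset.mem_univ _⟩, ?_⟩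
    by_cases hP : z.1.1 = z.2.1 ∨ z.1.1 = z.2.2
    · simpa [hP] using hrec.1
    · have : ((1:Fin 2) = 0) = False := by simp
      simpa [hP, this] using hrec.1
  · intro z hz z' hz' heq
    obtain ⟨hx, hy, hvy⟩ := hmem z hz
    obtain ⟨hx', hy', hvy'⟩ := hmem z' hz'
    simp only [Prod.mk.injEq] at heq
    obtain ⟨h1, hs, hw⟩ := heq
    have hPiff : (z.1.1 = z.2.1 ∨ z.1.1 = z.2.2) ↔ (z'.1.1 = z'.2.1 ∨ z'.1.1 = z'.2.2) := by
      by_cases hP : z.1.1 = z.2.1 ∨ z.1.1 = z.2.2 <;>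
        by_cases hP' : z'.1.1 = z'.2.1 ∨ z'.1.1 = z'.2.2 <;>
        simp [hP, hP'] at hs ⊢
    have hv : (if z.1.1 = z.2.1 ∨ z.1.1 = z.2.2 then z.1.1 else z.1.2)
        = (if z'.1.1 = z'.2.1 ∨ z'.1.1 = z'.2.2 then z'.1.1 else z'.1.2) := by
      by_cases hP : z.1.1 = z.2.1 ∨ z.1.1 = z.2.2
      · rw [if_pos hP, if_pos (hPiff.1 hP), h1]
      · rw [if_neg hP, if_neg (fun h => hP (hPiff.2 h)), h1]
    have hrec := recon z.2 _ hy hvy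
    have hrec' := recon z'.2 _ hy' hvy'
    have : z.2 = z'.2 := by
      rw [hrec.2, hrec'.2, hw, hv]
    exact Prod.ext h1 this

set_option maxHeartbeats 1000000 in
theorem stmt14 (k d : ℕ) (hd : 3 ≤ d) (p : Fin k → ℝ) (hp : ∀ i, 0 ≤ p i)
    (hsum : ∑ i, p i = 1)
    (μ₁ : Measure (Fin k)) (hμ : IsProbabilityMeasure μ₁)
    (hμp : ∀ i, μ₁ {i} = ENNReal.ofReal (p i))
    (C : (Fin d → Fin k) → ℝ)
    (hC : C = fun f => ∑ i : Fin d, ∑ j : Fin d,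
      if i < j ∧ f i = f j then (1:ℝ) else 0)
    (hEC : 1 ≤ ∫ f, C f ∂(Measure.pi fun _ : Fin d => μ₁)) :
    ∫ f, (C f - ∫ g, C g ∂(Measure.pi fun _ : Fin d => μ₁)) ^ 2
        ∂(Measure.pi fun _ : Fin d => μ₁)
      ≤ 4 * (∫ f, C f ∂(Measure.pi fun _ : Fin d => μ₁)) ^ ((3:ℝ) / 2) := by
  classical
  set μ := Measure.pi fun _ : Fin d => μ₁ with hμdef
  have hsing : ∀ f : Fin d → Fin k, (μ {f}).toReal = ∏ l, p (f l) := by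
    intro f
    rw [hμdef, show ({f} : Set (Fin d → Fin k)) = Set.pi Set.univ (fun i => {f i}) by
      ext g; simp [Set.eq_singleton_iff_unique_mem, funext_iff, Set.mem_pi],
      Measure.pi_pi, ENNReal.toReal_prod]
    exact Finset.prod_congr rfl fun i _ => by rw [hμp, ENNReal.toReal_ofReal (hp _)]
  have hInt : ∀ g : (Fin d → Fin k) → ℝ,
      ∫ f, g f ∂μ = ∑ f : Fin d → Fin k, (∏ l, p (f l)) * g f := by
    intro g
    rw [integral_fintype .of_finite]
    exact Finset.sum_congr rfl fun f _ => by rw [smul_eq_mul, measureReal_def, hsing]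
  set E := Finset.univ.filter fun x : Fin d × Fin d => x.1 < x.2 with hEdef
  have hCsum : ∀ f : Fin d → Fin k, C f = ∑ x ∈ E, (if f x.1 = f x.2 then (1:ℝ) else 0) := by
    intro f
    rw [hEdef, Finset.sum_filter, Fintype.sum_prod_type]
    simp only [hC]
    exact Finset.sum_congr rfl fun i _ => Finset.sum_congr rfl fun j _ => by
      by_cases h1 : i < j <;> by_cases h2 : f i = f j <;> simp [h1, h2]
  have hne : ∀ x ∈ E, x.1 ≠ x.2 := fun x hx => ((Finset.mem_filter.1 hx).2).ne
  have hS0 : (0:ℝ) ≤ ∑ a, p a ^ 2 := Finset.sum_nonneg fun a _ => sq_nonneg _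
  have hE1 : ∀ x ∈ E, ∑ f : Fin d → Fin k,
      (∏ l, p (f l)) * (if f x.1 = f x.2 then (1:ℝ) else 0) = ∑ a, p a ^ 2 := by
    intro x hx
    have h1 : ∀ f : Fin d → Fin k, (∏ l, p (f l)) * (if f x.1 = f x.2 then (1:ℝ) else 0)
        = ∑ a, (∏ l, p (f l)) *
            ∏ l ∈ ({x.1, x.2} : Finset (Fin d)), (if f l = a then (1:ℝ) else 0) := by
      intro f; rw [ind_pair x.1 x.2 f, Finset.mul_sum]
    rw [Finset.sum_congr rfl fun f _ => h1 f, Finset.sum_comm]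
    exact Finset.sum_congr rfl fun a _ => by
      rw [moment1 p hsum _ a, Finset.card_pair (hne x hx)]
  have hwC : ∑ f : Fin d → Fin k, (∏ l, p (f l)) * C f = (E.card : ℝ) * ∑ a, p a ^ 2 := by
    calc ∑ f : Fin d → Fin k, (∏ l, p (f l)) * C f
        = ∑ f : Fin d → Fin k, ∑ x ∈ E,
            (∏ l, p (f l)) * (if f x.1 = f x.2 then (1:ℝ) else 0) := by
          refine Finset.sum_congr rfl fun f _ => ?_
          rw [hCsum f, Finset.mul_sum]
      _ = ∑ x ∈ E, ∑ f : Fin d → Fin k,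
            (∏ l, p (f l)) * (if f x.1 = f x.2 then (1:ℝ) else 0) := Finset.sum_comm
      _ = ∑ _x ∈ E, ∑ a, p a ^ 2 := Finset.sum_congr rfl hE1
      _ = (E.card : ℝ) * ∑ a, p a ^ 2 := by rw [Finset.sum_const, nsmul_eq_mul]
  have hECeq : ∫ f, C f ∂μ = (E.card : ℝ) * ∑ a, p a ^ 2 := by rw [hInt C, hwC]
  have htot : ∑ f : Fin d → Fin k, (∏ l, p (f l)) = 1 := by
    rw [show (fun f : Fin d → Fin k => ∏ l, p (f l)) = fun f => ∏ l, (fun _ : Fin d => p) l (f l) from rfl,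
      key_sum (fun _ b => p b)]
    simp [hsum]
  have hvar : ∫ f, (C f - ∫ g, C g ∂μ) ^ 2 ∂μ
      = (∑ f : Fin d → Fin k, (∏ l, p (f l)) * (C f)^2)
        - ((E.card : ℝ) * ∑ a, p a ^ 2)^2 := by
    rw [hECeq, hInt (fun f => (C f - ((E.card : ℝ) * ∑ a, p a ^ 2))^2)]
    have expand : ∀ f : Fin d → Fin k,
        (∏ l, p (f l)) * (C f - ((E.card:ℝ) * ∑ a, p a ^ 2))^2
        = (∏ l, p (f l)) * (C f)^2
          - (2*((E.card:ℝ) * ∑ a, p a ^ 2))*((∏ l, p (f l)) * C f)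
          + ((E.card:ℝ) * ∑ a, p a ^ 2)^2 * (∏ l, p (f l)) := fun f => by ring
    rw [Finset.sum_congr rfl fun f _ => expand f, Finset.sum_add_distrib,
      Finset.sum_sub_distrib, ← Finset.mul_sum, ← Finset.mul_sum, hwC, htot, mul_one]
    ring
  have hQ : ∑ f : Fin d → Fin k, (∏ l, p (f l)) * (C f)^2
      = ∑ x ∈ E, ∑ y ∈ E, ∑ f : Fin d → Fin k, (∏ l, p (f l)) *
          ((if f x.1 = f x.2 then (1:ℝ) else 0) * (if f y.1 = f y.2 then (1:ℝ) else 0)) := by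
    have h1 : ∀ f : Fin d → Fin k, (∏ l, p (f l)) * (C f)^2
        = ∑ x ∈ E, ∑ y ∈ E, (∏ l, p (f l)) *
            ((if f x.1 = f x.2 then (1:ℝ) else 0) * (if f y.1 = f y.2 then (1:ℝ) else 0)) := by
      intro f
      rw [sq, hCsum f, Finset.sum_mul_sum, Finset.mul_sum]
      exact Finset.sum_congr rfl fun x _ => by rw [Finset.mul_sum]
    rw [Finset.sum_congr rfl fun f _ => h1 f, Finset.sum_comm]
    exact Finset.sum_congr rfl fun x _ => Finset.sum_comm
  have hsqrt0 : 0 ≤ Real.sqrt (∑ a, p a ^ 2) := Real.sqrt_nonneg _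
  have hT32 : ∑ a, p a ^ 3 ≤ (∑ a, p a ^ 2) * Real.sqrt (∑ a, p a ^ 2) := by
    have hps : ∀ a, p a ≤ Real.sqrt (∑ a, p a ^ 2) := by
      intro a
      have h1 : p a ^ 2 ≤ ∑ a, p a ^ 2 :=
        Finset.single_le_sum (f := fun a => p a ^ 2) (fun a _ => sq_nonneg _)
          (Finset.mem_univ a)
      calc p a = Real.sqrt (p a ^ 2) := (Real.sqrt_sq (hp a)).symm
        _ ≤ Real.sqrt (∑ a, p a ^ 2) := Real.sqrt_le_sqrt h1
    calc ∑ a, p a ^ 3 ≤ ∑ a, p a ^ 2 * Real.sqrt (∑ a, p a ^ 2) := by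
          refine Finset.sum_le_sum fun a _ => ?_
          calc p a ^ 3 = p a ^ 2 * p a := by ring
            _ ≤ p a ^ 2 * Real.sqrt (∑ a, p a ^ 2) :=
                mul_le_mul_of_nonneg_left (hps a) (sq_nonneg _)
      _ = (∑ a, p a ^ 2) * Real.sqrt (∑ a, p a ^ 2) := by rw [← Finset.sum_mul]
  have hbound : ∀ x ∈ E, ∀ y ∈ E,
      (∑ f : Fin d → Fin k, (∏ l, p (f l)) *
        ((if f x.1 = f x.2 then (1:ℝ) else 0) * (if f y.1 = f y.2 then (1:ℝ) else 0)))
        - (∑ a, p a ^ 2)^2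
      ≤ (if x = y then (∑ a, p a ^ 2) else
          if (x.1 = y.1 ∨ x.1 = y.2 ∨ x.2 = y.1 ∨ x.2 = y.2)
          then (∑ a, p a ^ 2) * Real.sqrt (∑ a, p a ^ 2) else 0) := by
    intro x hx y hy
    have hxlt := (Finset.mem_filter.1 hx).2
    have hylt := (Finset.mem_filter.1 hy).2
    by_cases hxy : x = y
    · subst hxy
      rw [if_pos rfl, G_union p hsum x.1 x.2 x.1 x.2 x.1 (by simp) (by simp),
        Finset.union_self, Finset.card_pair (hne x hx)]
      exact sub_le_self _ (sq_nonneg _)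
    · rw [if_neg hxy]
      by_cases hsh : (x.1 = y.1 ∨ x.1 = y.2 ∨ x.2 = y.1 ∨ x.2 = y.2)
      · rw [if_pos hsh]
        have hG : ∑ f : Fin d → Fin k, (∏ l, p (f l)) *
            ((if f x.1 = f x.2 then (1:ℝ) else 0) * (if f y.1 = f y.2 then (1:ℝ) else 0))
            = ∑ a, p a ^ 3 := by
          have hcard := union_card3 x y hxlt hylt hxy hsh
          rcases hsh with h | h | h | h
          · rw [G_union p hsum x.1 x.2 y.1 y.2 x.1 (by simp) (by simp [h]), hcard]
          · rw [G_union p hsum x.1 x.2 y.1 y.2 x.1 (by simp) (by simp [h]), hcard]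
          · rw [G_union p hsum x.1 x.2 y.1 y.2 x.2 (by simp) (by simp [h]), hcard]
          · rw [G_union p hsum x.1 x.2 y.1 y.2 x.2 (by simp) (by simp [h]), hcard]
        rw [hG]
        calc (∑ a, p a ^ 3) - (∑ a, p a ^ 2)^2 ≤ ∑ a, p a ^ 3 :=
              sub_le_self _ (sq_nonneg _)
          _ ≤ (∑ a, p a ^ 2) * Real.sqrt (∑ a, p a ^ 2) := hT32
      · rw [if_neg hsh]
        push_neg at hsh
        obtain ⟨h1, h2, h3, h4⟩ := hsh
        have hdisj : Disjoint ({x.1, x.2} : Finset (Fin d)) {y.1, y.2} := by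
          rw [Finset.disjoint_left]
          intro a ha hb
          simp only [Finset.mem_insert, Finset.mem_singleton] at ha hb
          rcases ha with rfl | rfl <;> rcases hb with h | h <;> tauto
        rw [G_disj p hsum x.1 x.2 y.1 y.2 hdisj, Finset.card_pair (hne x hx),
          Finset.card_pair (hne y hy)]
        have : (∑ a, p a ^ 2) * (∑ a, p a ^ 2) - (∑ a, p a ^ 2)^2 = 0 := by ring
        linarith
  -- sum of bounds
  have hM2 : ((E.card : ℝ) * ∑ a, p a ^ 2)^2 = ∑ _x ∈ E, ∑ _y ∈ E, (∑ a, p a ^ 2)^2 := by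
    rw [Finset.sum_const, Finset.sum_const, nsmul_eq_mul, nsmul_eq_mul]
    ring
  have step : ∫ f, (C f - ∫ g, C g ∂μ) ^ 2 ∂μ
      ≤ ∑ x ∈ E, ∑ y ∈ E, (if x = y then (∑ a, p a ^ 2) else
          if (x.1 = y.1 ∨ x.1 = y.2 ∨ x.2 = y.1 ∨ x.2 = y.2)
          then (∑ a, p a ^ 2) * Real.sqrt (∑ a, p a ^ 2) else 0) := by
    rw [hvar, hQ, hM2, ← Finset.sum_sub_distrib]
    refine Finset.sum_le_sum fun x hx => ?_
    rw [← Finset.sum_sub_distrib]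
    exact Finset.sum_le_sum fun y hy => hbound x hx y hy
  have hsplit : ∑ x ∈ E, ∑ y ∈ E, (if x = y then (∑ a, p a ^ 2) else
          if (x.1 = y.1 ∨ x.1 = y.2 ∨ x.2 = y.1 ∨ x.2 = y.2)
          then (∑ a, p a ^ 2) * Real.sqrt (∑ a, p a ^ 2) else 0)
      = (E.card : ℝ) * (∑ a, p a ^ 2)
        + (((E ×ˢ E).filter fun z => z.1 ≠ z.2 ∧
            (z.1.1 = z.2.1 ∨ z.1.1 = z.2.2 ∨ z.1.2 = z.2.1 ∨ z.1.2 = z.2.2)).card : ℝ)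
          * ((∑ a, p a ^ 2) * Real.sqrt (∑ a, p a ^ 2)) := by
    have hpoint : ∀ x y : Fin d × Fin d,
        (if x = y then (∑ a, p a ^ 2) else
          if (x.1 = y.1 ∨ x.1 = y.2 ∨ x.2 = y.1 ∨ x.2 = y.2)
          then (∑ a, p a ^ 2) * Real.sqrt (∑ a, p a ^ 2) else 0)
        = (if x = y then (∑ a, p a ^ 2) else 0)
          + ((∑ a, p a ^ 2) * Real.sqrt (∑ a, p a ^ 2)) *
            (if x ≠ y ∧ (x.1 = y.1 ∨ x.1 = y.2 ∨ x.2 = y.1 ∨ x.2 = y.2)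
              then (1:ℝ) else 0) := by
      intro x y
      by_cases h1 : x = y
      · simp [h1]
      · by_cases h2 : (x.1 = y.1 ∨ x.1 = y.2 ∨ x.2 = y.1 ∨ x.2 = y.2) <;> simp [h1, h2]
    rw [Finset.sum_congr rfl fun x _ => Finset.sum_congr rfl fun y _ => hpoint x y]
    rw [Finset.sum_congr rfl fun x _ => Finset.sum_add_distrib, Finset.sum_add_distrib]
    congr 1
    · rw [Finset.sum_congr rfl fun x hx => Finset.sum_ite_eq E x (fun _ => (∑ a, p a ^ 2))]
      rw [Finset.sum_congr rfl fun x hx => if_pos hx, Finset.sum_const, nsmul_eq_mul]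
    · simp_rw [← Finset.mul_sum]
      rw [← Finset.sum_product', Finset.sum_boole, mul_comm]
  rw [hsplit] at step
  -- numeric endgame
  have hA := countA d
  have hcard2 := two_mul_N d
  have hd1 : 1 ≤ d := le_trans (by norm_num) hd
  have hN0 : (0:ℝ) ≤ (E.card : ℝ) := Nat.cast_nonneg _
  have h2N : 2 * (E.card : ℝ) + d = d * d := by exact_mod_cast hcard2
  have hAcast : ((((E ×ˢ E).filter fun z => z.1 ≠ z.2 ∧
        (z.1.1 = z.2.1 ∨ z.1.1 = z.2.2 ∨ z.1.2 = z.2.1 ∨ z.1.2 = z.2.2)).card : ℕ) : ℝ)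
      ≤ (E.card : ℝ) * (2 * ((d:ℝ) - 1)) := by
    calc ((((E ×ˢ E).filter fun z => z.1 ≠ z.2 ∧
        (z.1.1 = z.2.1 ∨ z.1.1 = z.2.2 ∨ z.1.2 = z.2.1 ∨ z.1.2 = z.2.2)).card : ℕ) : ℝ)
        ≤ ((E.card * (2 * (d - 1)) : ℕ) : ℝ) := Nat.cast_le.2 hA
      _ = (E.card : ℝ) * (2 * ((d:ℝ) - 1)) := by
          push_cast [Nat.cast_sub hd1]
          ring
  rw [hECeq] at hEC
  conv_rhs => rw [hECeq]
  refine le_trans step ?_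
  have hNS : (1:ℝ) ≤ (E.card : ℝ) * ∑ a, p a ^ 2 := hEC
  have hrpow : ((E.card : ℝ) * ∑ a, p a ^ 2) ^ ((3:ℝ)/2)
      = ((E.card : ℝ) * ∑ a, p a ^ 2) *
        (Real.sqrt (E.card : ℝ) * Real.sqrt (∑ a, p a ^ 2)) := by
    have h0 : (0:ℝ) < (E.card : ℝ) * ∑ a, p a ^ 2 := lt_of_lt_of_le one_pos hNS
    rw [show (3:ℝ)/2 = 1 + 1/2 by norm_num, Real.rpow_add h0, Real.rpow_one,
      ← Real.sqrt_eq_rpow, Real.sqrt_mul hN0]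
  rw [hrpow]
  set N := (E.card : ℝ) with hNdef
  set S := (∑ a, p a ^ 2) with hSdef
  set r := Real.sqrt N with hrdef
  set s := Real.sqrt S with hsdef
  have hr0 : 0 ≤ r := Real.sqrt_nonneg _
  have hs0 : 0 ≤ s := Real.sqrt_nonneg _
  have hr2 : r ^ 2 = N := Real.sq_sqrt hN0
  have hs2 : s ^ 2 = S := Real.sq_sqrt hS0
  have hrs : 1 ≤ r * s := by
    have h1 : Real.sqrt 1 ≤ Real.sqrt (N * S) := Real.sqrt_le_sqrt hNS
    rwa [Real.sqrt_one, Real.sqrt_mul hN0] at h1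
  have hd3 : (3:ℝ) ≤ (d:ℝ) := by exact_mod_cast hd
  have hdr : 2 * ((d:ℝ) - 1) ≤ 3 * r := by
    have hsq : (2 * ((d:ℝ) - 1)) ^ 2 ≤ (3 * r) ^ 2 := by
      nlinarith [h2N, hr2, hd3, sq_nonneg ((d:ℝ))]
    calc 2 * ((d:ℝ) - 1) = Real.sqrt ((2 * ((d:ℝ) - 1)) ^ 2) :=
          (Real.sqrt_sq (by linarith)).symm
      _ ≤ Real.sqrt ((3 * r) ^ 2) := Real.sqrt_le_sqrt hsq
      _ = 3 * r := Real.sqrt_sq (by linarith)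
  have hterm1 : N * S ≤ N * S * (r * s) :=
    le_mul_of_one_le_right (by nlinarith [hNS, hN0, hS0]) hrs
  have hterm2 : ((((E ×ˢ E).filter fun z => z.1 ≠ z.2 ∧
        (z.1.1 = z.2.1 ∨ z.1.1 = z.2.2 ∨ z.1.2 = z.2.1 ∨ z.1.2 = z.2.2)).card : ℕ) : ℝ)
          * (S * s)
      ≤ (N * (2 * ((d:ℝ) - 1))) * (S * s) :=
    mul_le_mul_of_nonneg_right hAcast (mul_nonneg hS0 hs0)
  have hterm3 : (N * (2 * ((d:ℝ) - 1))) * (S * s) ≤ 3 * (N * S * (r * s)) := by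
    have hx : 0 ≤ N * S * s := by positivity
    nlinarith [mul_nonneg (sub_nonneg.2 hdr) hx]
  linarith [hterm1, hterm2, hterm3]
end

section
/- Let p = (p₁, …, p_m) be a probability vector (pᵢ ≥ 0, Σᵢ pᵢ = 1). Then there exist m probability vectors q^{(1)}, …, q^{(m)} on {1, …, m}, each supported on at most 2 indices, such that p = (1/m) · Σ_{j=1}^{m} q^{(j)}. -/
open Finset

private lemma alias_aux (m : ℕ) (hm : 0 < m) :
    ∀ (k : ℕ) (p : Fin m → ℝ), (∀ i, 0 ≤ p i) → (∑ i, p i = (k : ℝ) / m) →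
    ((Finset.univ.filter fun i => p i ≠ 0).card ≤ k) →
    ∃ q : Fin k → Fin m → ℝ,
      (∀ j, (∀ i, 0 ≤ q j i) ∧ (∑ i, q j i = 1) ∧
        (Finset.univ.filter fun i => q j i ≠ 0).card ≤ 2) ∧
      ∀ i, p i = (1 / (m : ℝ)) * ∑ j, q j i := by
  have hm' : (0 : ℝ) < m := by exact_mod_cast hm
  intro k
  induction k with
  | zero =>
    intro p hp hsum _
    have hzero : ∀ i ∈ Finset.univ, p i = 0 := by
      rw [← Finset.sum_eq_zero_iff_of_nonneg (fun i _ => hp i)]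
      simpa using hsum
    refine ⟨fun j => j.elim0, fun j => j.elim0, fun i => ?_⟩
    simp [hzero i (Finset.mem_univ i)]
  | succ k ih =>
    intro p hp hsum hcard
    push_cast at hsum
    set S : Finset (Fin m) := Finset.univ.filter fun i => p i ≠ 0 with hS
    have hsumS : ∑ s ∈ S, p s = ((k : ℝ) + 1) / m := by
      rw [← hsum, hS]
      exact Finset.sum_filter_of_ne (fun x _ h => h)
    have hSne : S.Nonempty := by
      by_contra h
      rw [Finset.not_nonempty_iff_eq_empty] at h
      rw [h, Finset.sum_empty] at hsumS
      have : (0:ℝ) < ((k:ℝ)+1)/m := by positivity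
      linarith
    obtain ⟨i, hiS, hmin⟩ := S.exists_min_image p hSne
    obtain ⟨j, hjS, hmax⟩ := S.exists_max_image p hSne
    have hpi_pos : 0 < p i := lt_of_le_of_ne (hp i) (Ne.symm (by simpa [hS] using hiS))
    have hScard : (S.card : ℝ) ≤ (k : ℝ) + 1 := by exact_mod_cast hcard
    have hSc1 : 1 ≤ S.card := Finset.card_pos.mpr hSne
    -- max is at least 1/m
    have hmax1m : 1 / (m:ℝ) ≤ p j := by
      have h1 : ∑ s ∈ S, p s ≤ S.card * p j :=
        le_trans (Finset.sum_le_card_nsmul S p (p j) (fun s hs => hmax s hs))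
          (by simp [nsmul_eq_mul])
      have h2 : (S.card : ℝ) * p j ≤ ((k:ℝ)+1) * p j := by
        apply mul_le_mul_of_nonneg_right hScard
        exact le_trans (hp i) (hmin j hjS)
      have h3 : ((k:ℝ)+1)/m ≤ ((k:ℝ)+1) * p j := by linarith [hsumS ▸ h1]
      have hk1 : (0:ℝ) < (k:ℝ)+1 := by positivity
      rw [div_le_iff₀ hm'] at h3 ⊢
      nlinarith
    by_cases hcase : p i < 1 / m
    · -- two-point alias vector: weight m*p i at i, rest at j
      have hij : i ≠ j := by
        intro h; rw [h] at hcase; linarith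
      set a : ℝ := (m : ℝ) * p i with ha
      have ha0 : 0 ≤ a := by positivity
      have ha1 : a < 1 := by
        rw [ha]
        calc (m:ℝ) * p i < (m:ℝ) * (1/m) := by
              apply mul_lt_mul_of_pos_left hcase hm'
          _ = 1 := by field_simp
      set q0 : Fin m → ℝ := fun t => if t = i then a else if t = j then 1 - a else 0 with hq0
      set p' : Fin m → ℝ := fun t => p t - (1/(m:ℝ)) * q0 t with hp'
      have hq0i : q0 i = a := by simp [hq0]
      have hq0j : q0 j = 1 - a := by simp [hq0, hij.symm, if_neg hij.symm]
      have hq0split : q0 = fun t => (if t = i then a else 0) + (if t = j then 1 - a else 0) := by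
        funext t
        by_cases hti : t = i
        · subst hti; simp [hq0, hij]
        · by_cases htj : t = j
          · subst htj; simp [hq0, hij.symm, hti]
          · simp [hq0, hti, htj]
      have hq0nn : ∀ t, 0 ≤ q0 t := by
        intro t
        rw [hq0split]
        have : (0:ℝ) ≤ 1 - a := by linarith
        positivity
      have hq0sum : ∑ t, q0 t = 1 := by
        rw [hq0split, Finset.sum_add_distrib]
        simp
      have hq0supp : (Finset.univ.filter fun t => q0 t ≠ 0).card ≤ 2 := by
        have hsub : (Finset.univ.filter fun t => q0 t ≠ 0) ⊆ {i, j} := by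
          intro t ht
          simp only [Finset.mem_filter, Finset.mem_univ, true_and] at ht
          simp only [Finset.mem_insert, Finset.mem_singleton]
          by_contra hc
          push_neg at hc
          simp [hq0, hc.1, hc.2] at ht
        exact le_trans (Finset.card_le_card hsub)
          (le_trans (Finset.card_insert_le _ _) (by simp))
      have hp'nn : ∀ t, 0 ≤ p' t := by
        intro t
        by_cases hti : t = i
        · subst hti
          simp only [hp', hq0i, ha]
          field_simp
          simp
        · by_cases htj : t = j
          · subst htj
            simp only [hp', hq0j]
            have hrw : (1/(m:ℝ)) * (1 - a) = 1/m - p i := by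
              rw [ha]; field_simp
            rw [hrw]
            linarith [hmax1m, hp i]
          · simp only [hp', hq0, if_neg hti, if_neg htj, mul_zero, sub_zero]
            exact hp t
      have hp'i : p' i = 0 := by
        simp only [hp', hq0i, ha]
        field_simp
        simp
      have hp'sum : ∑ t, p' t = (k:ℝ)/m := by
        simp only [hp', Finset.sum_sub_distrib, ← Finset.mul_sum, hq0sum, hsum]
        ring
      have hp'card : (Finset.univ.filter fun t => p' t ≠ 0).card ≤ k := by
        have hsub : (Finset.univ.filter fun t => p' t ≠ 0) ⊆ S.erase i := by
          intro t ht
          simp only [Finset.mem_filter, Finset.mem_univ, true_and] at ht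
          have hti : t ≠ i := by
            intro h; subst h; exact ht hp'i
          refine Finset.mem_erase.mpr ⟨hti, ?_⟩
          by_cases htj : t = j
          · subst htj; exact hjS
          · simp only [hp', hq0, if_neg hti, if_neg htj, mul_zero, sub_zero] at ht
            simp [hS, ht]
        have := Finset.card_le_card hsub
        rw [Finset.card_erase_of_mem hiS] at this
        omega
      obtain ⟨q', hq'cond, hq'eq⟩ := ih p' hp'nn hp'sum hp'card
      refine ⟨Fin.cons q0 q', ?_, ?_⟩
      · intro t
        refine Fin.cases ?_ ?_ t
        · exact ⟨hq0nn, hq0sum, hq0supp⟩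
        · intro t'; simpa using hq'cond t'
      · intro t
        rw [Fin.sum_univ_succ]
        simp only [Fin.cons_zero, Fin.cons_succ]
        have := hq'eq t
        have hpt : p t = p' t + (1/(m:ℝ)) * q0 t := by simp [hp']
        rw [hpt, this]
        ring
    · -- one-point vector at i
      push_neg at hcase
      set q0 : Fin m → ℝ := fun t => if t = i then 1 else 0 with hq0
      set p' : Fin m → ℝ := fun t => p t - (1/(m:ℝ)) * q0 t with hp'
      have hq0nn : ∀ t, 0 ≤ q0 t := by intro t; rw [hq0]; positivity
      have hq0i1 : q0 i = 1 := by simp [hq0]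
      have hq0sum : ∑ t, q0 t = 1 := by simp [hq0]
      have hq0supp : (Finset.univ.filter fun t => q0 t ≠ 0).card ≤ 2 := by
        have hsub : (Finset.univ.filter fun t => q0 t ≠ 0) ⊆ {i} := by
          intro t ht
          simp only [Finset.mem_filter, Finset.mem_univ, true_and] at ht
          simp only [Finset.mem_singleton]
          by_contra hc
          simp [hq0, hc] at ht
        exact le_trans (Finset.card_le_card hsub) (by simp)
      have hp'nn : ∀ t, 0 ≤ p' t := by
        intro t
        by_cases hti : t = i
        · subst hti
          simp only [hp', hq0i1, mul_one]
          linarith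
        · simp only [hp', hq0, if_neg hti, mul_zero, sub_zero]
          exact hp t
      have hp'sum : ∑ t, p' t = (k:ℝ)/m := by
        simp only [hp', Finset.sum_sub_distrib, ← Finset.mul_sum, hq0sum, hsum]
        ring
      have hp'card : (Finset.univ.filter fun t => p' t ≠ 0).card ≤ k := by
        by_cases hpi1 : p i = 1/m
        · have hp'i : p' i = 0 := by
            show p i - 1/(m:ℝ) * q0 i = 0
            rw [hq0i1, hpi1]; ring
          have hsub : (Finset.univ.filter fun t => p' t ≠ 0) ⊆ S.erase i := by
            intro t ht
            simp only [Finset.mem_filter, Finset.mem_univ, true_and] at ht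
            have hti : t ≠ i := by intro h; subst h; exact ht hp'i
            refine Finset.mem_erase.mpr ⟨hti, ?_⟩
            simp only [hp', hq0, if_neg hti, mul_zero, sub_zero] at ht
            simp [hS, ht]
          have := Finset.card_le_card hsub
          rw [Finset.card_erase_of_mem hiS] at this
          omega
        · have hpigt : 1/(m:ℝ) < p i := lt_of_le_of_ne hcase (Ne.symm hpi1)
          -- all support values exceed 1/m, so S.card < k+1
          have h1 : (S.card : ℝ) * p i ≤ ((k:ℝ)+1)/m := by
            rw [← hsumS]
            exact le_trans (by simp [nsmul_eq_mul])
              (Finset.card_nsmul_le_sum S p (p i) (fun s hs => hmin s hs))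
          have hSclt : (S.card : ℝ) < (k:ℝ) + 1 := by
            have hcardpos : (0:ℝ) < S.card := by exact_mod_cast hSc1
            have h2 : (S.card:ℝ) * (1/m) < (S.card:ℝ) * p i :=
              mul_lt_mul_of_pos_left hpigt hcardpos
            have key : (S.card:ℝ) * (1/m) < ((k:ℝ)+1) * (1/m) := by
              calc (S.card:ℝ)*(1/m) < (S.card:ℝ) * p i := h2
                _ ≤ ((k:ℝ)+1)/m := h1
                _ = ((k:ℝ)+1)*(1/m) := by ring
            exact lt_of_mul_lt_mul_right key (by positivity)
          have hSck : S.card ≤ k := by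
            have : (S.card : ℝ) < (k:ℝ) + 1 := hSclt
            exact_mod_cast Nat.lt_succ_iff.mp (by exact_mod_cast this)
          have hsub : (Finset.univ.filter fun t => p' t ≠ 0) ⊆ S := by
            intro t ht
            simp only [Finset.mem_filter, Finset.mem_univ, true_and] at ht
            by_cases hti : t = i
            · subst hti; exact hiS
            · simp only [hp', hq0, if_neg hti, mul_zero, sub_zero] at ht
              simp [hS, ht]
          exact le_trans (Finset.card_le_card hsub) hSck
      obtain ⟨q', hq'cond, hq'eq⟩ := ih p' hp'nn hp'sum hp'card
      refine ⟨Fin.cons q0 q', ?_, ?_⟩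
      · intro t
        refine Fin.cases ?_ ?_ t
        · exact ⟨hq0nn, hq0sum, hq0supp⟩
        · intro t'; simpa using hq'cond t'
      · intro t
        rw [Fin.sum_univ_succ]
        simp only [Fin.cons_zero, Fin.cons_succ]
        have := hq'eq t
        have hpt : p t = p' t + (1/(m:ℝ)) * q0 t := by simp [hp']
        rw [hpt, this]
        ring

theorem stmt15 (m : ℕ) (p : Fin m → ℝ) (hp : ∀ i, 0 ≤ p i) (hsum : ∑ i, p i = 1) :
    ∃ q : Fin m → Fin m → ℝ,
      (∀ j, (∀ i, 0 ≤ q j i) ∧ (∑ i, q j i = 1) ∧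
        (Finset.univ.filter fun i => q j i ≠ 0).card ≤ 2) ∧
      ∀ i, p i = (1 / (m : ℝ)) * ∑ j, q j i := by
  have hm : 0 < m := by
    rcases Nat.eq_zero_or_pos m with h | h
    · subst h; simp at hsum
    · exact h
  have hm' : (0:ℝ) < m := by exact_mod_cast hm
  exact alias_aux m hm m p hp (by rw [hsum]; field_simp)
    (le_trans (Finset.card_filter_le _ _) (by simp))
end

section
/- Let ε ∈ (0, 1), A ∈ R^{n×d}, b ∈ R^n, and let W ⊆ R^n be the linear subspace spanned by b together with the columns of A. Suppose Π ∈ R^{m×n} is a subspace embedding for W with parameter ε, i.e., (1−ε)‖x‖₂ ≤ ‖Πx‖₂ ≤ (1+ε)‖x‖₂ for all x ∈ W. Let x* minimize ‖Ax − b‖₂ over x ∈ R^d and let x̃ minimize ‖ΠAx − Πb‖₂ over x ∈ R^d. Then ‖Ax̃ − b‖₂ ≤ ((1+ε)/(1−ε)) · ‖Ax* − b‖₂. -/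
open MeasureTheory

/-- The Euclidean (ℓ₂) norm of a vector in `Fin k → ℝ`. -/
noncomputable def l2norm {k : ℕ} (v : Fin k → ℝ) : ℝ := Real.sqrt (∑ i, (v i) ^ 2)

theorem stmt18 (n m d : ℕ) (ε : ℝ) (hε : ε ∈ Set.Ioo (0:ℝ) 1)
    (A : Matrix (Fin n) (Fin d) ℝ) (b : Fin n → ℝ)
    (W : Submodule ℝ (Fin n → ℝ))
    (hW : W = Submodule.span ℝ ({b} ∪ Set.range fun j : Fin d => fun i : Fin n => A i j))
    (Φ : Matrix (Fin m) (Fin n) ℝ)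
    (hΦ : ∀ x ∈ W, (1 - ε) * l2norm x ≤ l2norm (Φ.mulVec x) ∧
        l2norm (Φ.mulVec x) ≤ (1 + ε) * l2norm x)
    (xstar xtilde : Fin d → ℝ)
    (hxstar : ∀ x : Fin d → ℝ, l2norm (A.mulVec xstar - b) ≤ l2norm (A.mulVec x - b))
    (hxtilde : ∀ x : Fin d → ℝ,
      l2norm ((Φ * A).mulVec xtilde - Φ.mulVec b) ≤ l2norm ((Φ * A).mulVec x - Φ.mulVec b)) :
    l2norm (A.mulVec xtilde - b) ≤ ((1 + ε) / (1 - ε)) * l2norm (A.mulVec xstar - b) := by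
  obtain ⟨hε0, hε1⟩ := hε
  have hbW : b ∈ W := by
    rw [hW]; exact Submodule.subset_span (Or.inl rfl)
  have hAxW : ∀ x : Fin d → ℝ, A.mulVec x ∈ W := by
    intro x
    have : A.mulVec x = ∑ j : Fin d, x j • (fun i : Fin n => A i j) := by
      ext i
      simp [Matrix.mulVec, dotProduct, Finset.sum_apply, mul_comm]
    rw [this]
    exact Submodule.sum_mem _ fun j _ => Submodule.smul_mem _ _
      (by rw [hW]; exact Submodule.subset_span (Or.inr ⟨j, rfl⟩))
  have hmem : ∀ x : Fin d → ℝ, A.mulVec x - b ∈ W := fun x =>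
    Submodule.sub_mem _ (hAxW x) hbW
  have hΦsub : ∀ x : Fin d → ℝ,
      (Φ * A).mulVec x - Φ.mulVec b = Φ.mulVec (A.mulVec x - b) := by
    intro x
    rw [Matrix.mulVec_sub, Matrix.mulVec_mulVec]
  have h1 : (1 - ε) * l2norm (A.mulVec xtilde - b)
      ≤ l2norm (Φ.mulVec (A.mulVec xtilde - b)) := (hΦ _ (hmem xtilde)).1
  have h2 : l2norm (Φ.mulVec (A.mulVec xtilde - b))
      ≤ l2norm (Φ.mulVec (A.mulVec xstar - b)) := by
    rw [← hΦsub, ← hΦsub]; exact hxtilde xstar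
  have h3 : l2norm (Φ.mulVec (A.mulVec xstar - b))
      ≤ (1 + ε) * l2norm (A.mulVec xstar - b) := (hΦ _ (hmem xstar)).2
  have hpos : (0:ℝ) < 1 - ε := by linarith
  rw [div_mul_eq_mul_div, le_div_iff₀ hpos, mul_comm]
  linarith
end
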